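/- Let C > 0. Define r_n := 1 − 2^{−n} and w_n := 1 − 3·2^{−(n+2)} for integers n ≥ 0, and define U : [0,1] → ℝ by U(t) := C·√(3·2^{n+2})·(t − r_n) for t ∈ [r_n, w_n], U(t) := C·√(3·2^{n+2})·(r_{n+1} − t) for t ∈ [w_n, r_{n+1}], and U(1) := 0. Then U is well-defined and continuous on [0,1], |U(1) − U(1−h)| ≤ C·√h for all h ∈ (0,1], and limsup_{h → 0⁺} |U(1) − U(1−h)|/√h = C. -/

import Mathlib

open Real Filter Set

noncomputable def tentS (C : ℝ) (n : ℕ) : ℝ := C * Real.sqrt (3 * 2 ^ (n + 2))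

noncomputable def tentF (C : ℝ) (n : ℕ) (t : ℝ) : ℝ :=
  tentS C n * max 0 (min (t - (1 - 1 / 2 ^ n)) ((1 - 1 / 2 ^ (n + 1)) - t))

noncomputable def Ufun (C : ℝ) (t : ℝ) : ℝ := ∑' n, tentF C n t

variable {C : ℝ}

lemma tentS_nonneg (hC : 0 ≤ C) (n : ℕ) : 0 ≤ tentS C n :=
  mul_nonneg hC (Real.sqrt_nonneg _)

lemma tentF_nonneg (hC : 0 ≤ C) (n : ℕ) (t : ℝ) : 0 ≤ tentF C n t :=
  mul_nonneg (tentS_nonneg hC n) (le_max_left _ _)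

lemma tentF_eq_zero_left (n : ℕ) {t : ℝ} (ht : t ≤ 1 - 1 / 2 ^ n) : tentF C n t = 0 := by
  have : min (t - (1 - 1 / 2 ^ n)) ((1 - 1 / 2 ^ (n + 1)) - t) ≤ 0 :=
    le_trans (min_le_left _ _) (by linarith)
  rw [tentF, max_eq_left this, mul_zero]

lemma tentF_eq_zero_right (n : ℕ) {t : ℝ} (ht : 1 - 1 / 2 ^ (n + 1) ≤ t) : tentF C n t = 0 := by
  have : min (t - (1 - 1 / 2 ^ n)) ((1 - 1 / 2 ^ (n + 1)) - t) ≤ 0 :=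
    le_trans (min_le_right _ _) (by linarith)
  rw [tentF, max_eq_left this, mul_zero]

lemma r_mono : ∀ {m n : ℕ}, m ≤ n → (1 - 1 / 2 ^ m : ℝ) ≤ 1 - 1 / 2 ^ n := by
  intro m n h
  have : (2:ℝ) ^ m ≤ 2 ^ n := pow_le_pow_right₀ (by norm_num) h
  have h1 : (0:ℝ) < 2 ^ m := by positivity
  have h2 : (0:ℝ) < 2 ^ n := by positivity
  have := one_div_le_one_div_of_le h1 this
  linarith

lemma Ufun_eq_tent (n : ℕ) {t : ℝ} (h1 : 1 - 1 / 2 ^ n ≤ t) (h2 : t ≤ 1 - 1 / 2 ^ (n + 1)) :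
    Ufun C t = tentF C n t := by
  refine tsum_eq_single n fun m hm => ?_
  rcases lt_or_gt_of_ne hm with hlt | hgt
  · exact tentF_eq_zero_right m (le_trans (r_mono hlt) h1)
  · exact tentF_eq_zero_left m (le_trans h2 (r_mono hgt))

lemma Ufun_one : Ufun C 1 = 0 := by
  have h : ∀ m : ℕ, tentF C m (1:ℝ) = 0 := fun m =>
    tentF_eq_zero_right m (by
      have : (0:ℝ) < 1 / 2 ^ (m + 1) := by positivity
      linarith)
  simp [Ufun, h]

lemma tentS_mul (n : ℕ) : tentS C n * (1 / 2 ^ (n + 2)) = C * Real.sqrt 3 * ((Real.sqrt 2)⁻¹) ^ (n + 2) := by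
  have h2 : Real.sqrt 2 * Real.sqrt 2 = 2 := Real.mul_self_sqrt (by norm_num)
  have key : Real.sqrt ((2:ℝ) ^ (n + 2)) = (Real.sqrt 2) ^ (n + 2) := by
    rw [Real.sqrt_eq_iff_eq_sq (by positivity) (by positivity), sq, ← mul_pow, h2]
  have h2pow : ((Real.sqrt 2) ^ (n + 2)) * ((Real.sqrt 2) ^ (n + 2)) = 2 ^ (n + 2) := by
    rw [← mul_pow, h2]
  have hinv : ((Real.sqrt 2) ^ (n + 2))⁻¹ = (Real.sqrt 2) ^ (n + 2) * (1 / 2 ^ (n + 2)) :=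
    inv_eq_of_mul_eq_one_right (by rw [← mul_assoc, h2pow]; field_simp)
  rw [tentS, Real.sqrt_mul (by norm_num), key, inv_pow, hinv]
  ring

lemma summable_bound (hC : 0 ≤ C) :
    Summable (fun n : ℕ => tentS C n * (1 / 2 ^ (n + 2))) := by
  have hs2 : (1:ℝ) < Real.sqrt 2 := by
    nlinarith [Real.sq_sqrt (by norm_num : (0:ℝ) ≤ 2), Real.sqrt_nonneg 2]
  have hpos : (0:ℝ) < Real.sqrt 2 := by linarith
  have hlt : (Real.sqrt 2)⁻¹ < 1 := by
    rw [inv_lt_one_iff₀]; right; exact hs2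
  have hgeo : Summable (fun n : ℕ => ((Real.sqrt 2)⁻¹) ^ n) :=
    summable_geometric_of_lt_one (by positivity) hlt
  have h2 : Summable (fun n : ℕ => ((Real.sqrt 2)⁻¹) ^ (n + 2)) := by
    exact_mod_cast (summable_nat_add_iff 2).mpr hgeo
  have h3 := h2.mul_left (C * Real.sqrt 3)
  exact h3.congr fun n => (tentS_mul n).symm

lemma tentF_bound (hC : 0 ≤ C) (n : ℕ) (t : ℝ) :
    ‖tentF C n t‖ ≤ tentS C n * (1 / 2 ^ (n + 2)) := by
  rw [Real.norm_eq_abs, abs_of_nonneg (tentF_nonneg hC n t)]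
  refine mul_le_mul_of_nonneg_left ?_ (tentS_nonneg hC n)
  rcases le_or_gt (min (t - (1 - 1 / 2 ^ n)) ((1 - 1 / 2 ^ (n + 1)) - t)) 0 with h | h
  · rw [max_eq_left h]; positivity
  · rw [max_eq_right h.le]
    have h1 := min_le_left (t - (1 - 1 / 2 ^ n : ℝ)) ((1 - 1 / 2 ^ (n + 1)) - t)
    have h2 := min_le_right (t - (1 - 1 / 2 ^ n : ℝ)) ((1 - 1 / 2 ^ (n + 1)) - t)
    have : (1 / 2 ^ n - 1 / 2 ^ (n + 1) : ℝ) = 2 * (1 / 2 ^ (n + 2)) := by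
      rw [pow_succ, pow_succ]; ring
    nlinarith [min_le_left (t - (1 - 1 / 2 ^ n : ℝ)) ((1 - 1 / 2 ^ (n + 1)) - t)]

lemma Ufun_continuous (hC : 0 ≤ C) : Continuous (Ufun C) := by
  refine continuous_tsum (fun n => ?_) (summable_bound hC) (tentF_bound hC)
  exact continuous_const.mul ((continuous_const.max
    (((continuous_id.sub continuous_const)).min (continuous_const.sub continuous_id))))

lemma pow_e1 (n : ℕ) : (1:ℝ) / 2 ^ (n + 1) = 2 * (1 / 2 ^ (n + 2)) := by
  have : (2:ℝ) ^ (n + 1) ≠ 0 := by positivity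
  field_simp
  rw [pow_succ]

lemma pow_e2 (n : ℕ) : (1:ℝ) / 2 ^ n = 4 * (1 / 2 ^ (n + 2)) := by
  rw [pow_succ, pow_succ]
  have : (2:ℝ) ^ n ≠ 0 := by positivity
  field_simp
  ring

lemma Ufun_nonneg (hC : 0 ≤ C) (t : ℝ) : 0 ≤ Ufun C t :=
  tsum_nonneg fun n => tentF_nonneg hC n t

lemma Ufun_left (n : ℕ) {t : ℝ} (h1 : 1 - 1 / 2 ^ n ≤ t) (h2 : t ≤ 1 - 3 / 2 ^ (n + 2)) :
    Ufun C t = C * Real.sqrt (3 * 2 ^ (n + 2)) * (t - (1 - 1 / 2 ^ n)) := by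
  have hq : (0:ℝ) < 1 / 2 ^ (n + 2) := by positivity
  have e1 := pow_e1 n
  have e2 := pow_e2 n
  have h3 : (3:ℝ) / 2 ^ (n + 2) = 3 * (1 / 2 ^ (n + 2)) := by ring
  have hle : t ≤ 1 - 1 / 2 ^ (n + 1) := by rw [e1]; rw [h3] at h2; linarith
  rw [Ufun_eq_tent n h1 hle, tentF, tentS]
  have hab : t - (1 - 1 / 2 ^ n) ≤ (1 - 1 / 2 ^ (n + 1)) - t := by
    rw [e1, e2]; rw [h3] at h2; linarith
  rw [min_eq_left hab, max_eq_right (by linarith)]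

lemma Ufun_right (n : ℕ) {t : ℝ} (h1 : 1 - 3 / 2 ^ (n + 2) ≤ t) (h2 : t ≤ 1 - 1 / 2 ^ (n + 1)) :
    Ufun C t = C * Real.sqrt (3 * 2 ^ (n + 2)) * ((1 - 1 / 2 ^ (n + 1)) - t) := by
  have hq : (0:ℝ) < 1 / 2 ^ (n + 2) := by positivity
  have e1 := pow_e1 n
  have e2 := pow_e2 n
  have h3 : (3:ℝ) / 2 ^ (n + 2) = 3 * (1 / 2 ^ (n + 2)) := by ring
  have hge : 1 - 1 / 2 ^ n ≤ t := by rw [e2]; rw [h3] at h1; linarith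
  rw [Ufun_eq_tent n hge h2, tentF, tentS]
  have hab : (1 - 1 / 2 ^ (n + 1)) - t ≤ t - (1 - 1 / 2 ^ n) := by
    rw [e1, e2]; rw [h3] at h1; linarith
  rw [min_eq_right hab, max_eq_right (by linarith)]

lemma Ufun_le (hC : 0 ≤ C) {h : ℝ} (h0 : 0 < h) (h1 : h ≤ 1) :
    Ufun C (1 - h) ≤ C * Real.sqrt h := by
  have hex : ∃ n : ℕ, (1:ℝ) / 2 ^ (n + 1) ≤ h := by
    obtain ⟨n, hn⟩ := exists_pow_lt_of_lt_one h0 (by norm_num : (1:ℝ)/2 < 1)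
    refine ⟨n, le_of_lt ?_⟩
    calc (1:ℝ) / 2 ^ (n + 1) ≤ 1 / 2 ^ n := by
          apply div_le_div_of_nonneg_left (by norm_num) (by positivity)
          exact pow_le_pow_right₀ (by norm_num) (Nat.le_succ n)
      _ = ((1:ℝ)/2) ^ n := by rw [div_pow, one_pow]
      _ < h := hn
  set n := Nat.find hex with hn_def
  have hlo : (1:ℝ) / 2 ^ (n + 1) ≤ h := Nat.find_spec hex
  have hhi : h ≤ (1:ℝ) / 2 ^ n := by
    rcases Nat.eq_zero_or_pos n with h0' | h0'
    · rw [h0']; simpa using h1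
    · have hmin := Nat.find_min hex (Nat.sub_lt h0' one_pos)
      have hnn : n - 1 + 1 = n := by omega
      rw [hnn] at hmin
      push_neg at hmin
      exact hmin.le
  have ht1 : 1 - 1 / 2 ^ n ≤ 1 - h := by linarith
  have ht2 : 1 - h ≤ 1 - 1 / 2 ^ (n + 1) := by linarith
  rw [Ufun_eq_tent n ht1 ht2, tentF, tentS]
  set q : ℝ := 1 / 2 ^ (n + 2) with hq_def
  have hq : (0:ℝ) < q := by positivity
  have e1 := pow_e1 n
  have e2 := pow_e2 n
  set m : ℝ := max 0 (min ((1 - h) - (1 - 1 / 2 ^ n)) ((1 - 1 / 2 ^ (n + 1)) - (1 - h))) with hm_def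
  have hm0 : 0 ≤ m := le_max_left _ _
  have key : 3 * 2 ^ (n + 2) * m ^ 2 ≤ h := by
    have hP : (2:ℝ) ^ (n + 2) = 1 / q := by rw [hq_def, one_div_one_div]
    have ha : (1 - h) - (1 - 1 / 2 ^ n) = 4 * q - h := by rw [e2]; ring
    have hb : (1 - 1 / 2 ^ (n + 1)) - (1 - h) = h - 2 * q := by rw [e1]; ring
    have key2 : 3 * m ^ 2 ≤ q * h := by
      rcases le_or_gt (min ((1 - h) - (1 - 1 / 2 ^ n)) ((1 - 1 / 2 ^ (n + 1)) - (1 - h))) 0 with hmin | hmin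
      · rw [hm_def, max_eq_left hmin]; nlinarith [mul_pos hq h0]
      · rw [hm_def, max_eq_right hmin.le, ha, hb]
        have hha : 2 * q ≤ h := by rw [e1] at hlo; linarith
        have hhb : h ≤ 4 * q := by rw [e2] at hhi; linarith
        rcases le_total (4 * q - h) (h - 2 * q) with hab | hab
        · rw [min_eq_left hab]
          nlinarith [mul_nonneg (by linarith : (0:ℝ) ≤ h - 3 * q) (by linarith : (0:ℝ) ≤ 16 * q - 3 * h)]
        · rw [min_eq_right hab]
          nlinarith [mul_nonneg (by linarith : (0:ℝ) ≤ 3 * q - h) (by linarith : (0:ℝ) ≤ 3 * h - 4 * q)]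
    calc 3 * 2 ^ (n + 2) * m ^ 2 = (3 * m ^ 2) / q := by rw [hP]; ring
      _ ≤ h := by rw [div_le_iff₀ hq]; linarith [key2]
  have hsq : Real.sqrt (3 * 2 ^ (n + 2)) * m ≤ Real.sqrt h := by
    have : Real.sqrt (3 * 2 ^ (n + 2) * m ^ 2) = Real.sqrt (3 * 2 ^ (n + 2)) * m := by
      rw [Real.sqrt_mul (show (0:ℝ) ≤ 3 * 2 ^ (n + 2) by positivity) (m ^ 2), Real.sqrt_sq hm0]
    rw [← this]
    exact Real.sqrt_le_sqrt key
  calc C * Real.sqrt (3 * 2 ^ (n + 2)) * m = C * (Real.sqrt (3 * 2 ^ (n + 2)) * m) := by ring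
    _ ≤ C * Real.sqrt h := mul_le_mul_of_nonneg_left hsq hC

lemma Ufun_peak (k : ℕ) : Ufun C (1 - 3 / 2 ^ (k + 2)) = C * Real.sqrt (3 / 2 ^ (k + 2)) := by
  have hq : (0:ℝ) < 1 / 2 ^ (k + 2) := by positivity
  have e2 := pow_e2 k
  have h1 : (1:ℝ) - 1 / 2 ^ k ≤ 1 - 3 / 2 ^ (k + 2) := by
    rw [e2]
    have : (3:ℝ) / 2 ^ (k + 2) = 3 * (1 / 2 ^ (k + 2)) := by ring
    rw [this]; linarith
  rw [Ufun_left k h1 le_rfl]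
  have harg : ((1:ℝ) - 3 / 2 ^ (k + 2)) - (1 - 1 / 2 ^ k) = 1 / 2 ^ (k + 2) := by rw [e2]; ring
  rw [harg, mul_assoc]
  congr 1
  rw [← Real.sqrt_sq hq.le, ← Real.sqrt_mul (by positivity)]
  congr 1
  have : (2:ℝ) ^ (k + 2) ≠ 0 := by positivity
  field_simp



/-- There is a well-defined continuous function `U : [0,1] → ℝ`,
piecewise linear with `U(rₙ) = 0` at `rₙ = 1 − 2⁻ⁿ`, peaks at `wₙ = 1 − 3·2⁻⁽ⁿ⁺²⁾`,
slope `±C √(3·2ⁿ⁺²)` on the pieces and `U 1 = 0`, which satisfies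
`|U 1 − U (1−h)| ≤ C √h` for all `h ∈ (0,1]` and
`limsup_{h→0⁺} |U 1 − U (1−h)|/√h = C`. -/
theorem stmt_10 (C : ℝ) (hC : 0 < C) :
    ∃ U : ℝ → ℝ,
      (∀ n : ℕ, ∀ t ∈ Set.Icc (1 - 1 / 2 ^ n : ℝ) (1 - 3 / 2 ^ (n + 2)),
        U t = C * Real.sqrt (3 * 2 ^ (n + 2)) * (t - (1 - 1 / 2 ^ n))) ∧
      (∀ n : ℕ, ∀ t ∈ Set.Icc (1 - 3 / 2 ^ (n + 2) : ℝ) (1 - 1 / 2 ^ (n + 1)),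
        U t = C * Real.sqrt (3 * 2 ^ (n + 2)) * ((1 - 1 / 2 ^ (n + 1)) - t)) ∧
      U 1 = 0 ∧
      ContinuousOn U (Set.Icc 0 1) ∧
      (∀ h ∈ Set.Ioc (0 : ℝ) 1, |U 1 - U (1 - h)| ≤ C * Real.sqrt h) ∧
      Filter.limsup (fun h => |U 1 - U (1 - h)| / Real.sqrt h)
        (nhdsWithin 0 (Set.Ioi 0)) = C := by
  have habs : ∀ x : ℝ, |Ufun C 1 - Ufun C (1 - x)| = Ufun C (1 - x) := fun x => by
    rw [Ufun_one, zero_sub, abs_neg, abs_of_nonneg (Ufun_nonneg hC.le _)]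
  refine ⟨Ufun C, fun n t ht => Ufun_left n ht.1 ht.2, fun n t ht => Ufun_right n ht.1 ht.2,
    Ufun_one, (Ufun_continuous hC.le).continuousOn, ?_, ?_⟩
  · intro h hh
    rw [habs]
    exact Ufun_le hC.le hh.1 hh.2
  · have hub : ∀ᶠ x in nhdsWithin (0:ℝ) (Set.Ioi 0),
        |Ufun C 1 - Ufun C (1 - x)| / Real.sqrt x ≤ C := by
      filter_upwards [Ioc_mem_nhdsGT_of_mem
        (by constructor <;> norm_num : (0:ℝ) ∈ Set.Ico (0:ℝ) 1)] with x hx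
      rw [habs, div_le_iff₀ (Real.sqrt_pos.mpr hx.1)]
      exact Ufun_le hC.le hx.1 hx.2
    have hfreq : ∃ᶠ x in nhdsWithin (0:ℝ) (Set.Ioi 0),
        C ≤ |Ufun C 1 - Ufun C (1 - x)| / Real.sqrt x := by
      have hseq : Filter.Tendsto (fun k : ℕ => (3 / 2 ^ (k + 2) : ℝ)) Filter.atTop
          (nhdsWithin 0 (Set.Ioi 0)) := by
        apply tendsto_nhdsWithin_of_tendsto_nhds_of_eventually_within
        · have hg : Filter.Tendsto (fun k : ℕ => ((1:ℝ)/2) ^ k) Filter.atTop (nhds 0) :=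
            tendsto_pow_atTop_nhds_zero_of_lt_one (by norm_num) (by norm_num)
          have h2 := hg.const_mul (3/4 : ℝ)
          rw [mul_zero] at h2
          refine h2.congr fun k => ?_
          have h4 : (2:ℝ) ^ (k + 2) = 2 ^ k * 4 := by rw [pow_succ, pow_succ]; ring
          rw [h4, div_pow, one_pow]
          have : (2:ℝ) ^ k ≠ 0 := by positivity
          field_simp
        · exact Filter.Eventually.of_forall fun k => by
            simp only [Set.mem_Ioi]; positivity
      refine hseq.frequently (Filter.Frequently.of_forall fun k => ?_)
      rw [habs, Ufun_peak k, mul_div_assoc,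
        div_self (Real.sqrt_ne_zero'.mpr (by positivity)), mul_one]
    exact le_antisymm
      (Filter.limsup_le_of_le (Filter.IsCoboundedUnder.of_frequently_ge hfreq) hub)
      (Filter.le_limsup_of_frequently_le hfreq (Filter.isBoundedUnder_of_eventually_le hub))
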